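/- Let 𝓘 be a maximal nested collection on the vertex set V of a finite tree Γ. Then every nonempty connected subset S ⊆ V contains a unique vertex m with S ⊆ I_m; equivalently, S has a unique maximum with respect to the order v ≤_𝓘 w defined by v ∈ I_w. -/

import Mathlib

namespace Paper

variable {V : Type*}

/-- The subgraph of `G` induced on `S` is connected (any two vertices of `S` are joined
by a walk inside `S`). -/
def Conn (G : SimpleGraph V) (S : Set V) : Prop := (G.induce S).Preconnected

/-- `C` is a connected component of (the subgraph of `G` induced on) `U`:
a maximal nonempty connected subset of `U`. -/
def IsCompOf (G : SimpleGraph V) (C U : Set V) : Prop :=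
  C.Nonempty ∧ C ⊆ U ∧ Conn G C ∧
    ∀ D : Set V, C ⊆ D → D ⊆ U → Conn G D → D = C

/-- A nested collection on (the vertex set of) `G`: a family of nonempty connected
subsets such that (1) any two members are nested or disjoint, and (2) the connected
components of the union of any pairwise disjoint subfamily are exactly the members of
that subfamily. -/
def Nested (G : SimpleGraph V) (𝓘 : Set (Set V)) : Prop :=
  (∀ S ∈ 𝓘, S.Nonempty ∧ Conn G S) ∧
  (∀ S ∈ 𝓘, ∀ T ∈ 𝓘, S ⊆ T ∨ T ⊆ S ∨ S ∩ T = ∅) ∧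
  (∀ 𝓙 ⊆ 𝓘, (𝓙.Pairwise fun A B => A ∩ B = ∅) →
    ∀ C : Set V, IsCompOf G C (⋃₀ 𝓙) ↔ C ∈ 𝓙)

/-- A maximal nested collection: a nested collection whose union is all of `V` and
which is not properly contained in any other nested collection. -/
def MaxNested (G : SimpleGraph V) (𝓘 : Set (Set V)) : Prop :=
  Nested G 𝓘 ∧ ⋃₀ 𝓘 = Set.univ ∧
    ∀ 𝓙 : Set (Set V), Nested G 𝓙 → 𝓘 ⊆ 𝓙 → 𝓙 = 𝓘

/-- `Iv` assigns to each vertex `v` the smallest element of `𝓘` containing `v`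
(denoted `I_v`). -/
def IsLeastContaining (𝓘 : Set (Set V)) (Iv : V → Set V) : Prop :=
  ∀ v : V, Iv v ∈ 𝓘 ∧ v ∈ Iv v ∧ ∀ J ∈ 𝓘, v ∈ J → Iv v ⊆ J

/-- The vertex set `[x,y]` of the unique path in a tree `G` from `x` to `y`:
the vertices lying on every path from `x` to `y`. -/
def interval (G : SimpleGraph V) (x y : V) : Set V :=
  {u | ∀ p : G.Walk x y, p.IsPath → u ∈ p.support}

/-- `S` is rooted with respect to the nested collection (with least-member function
`Iv`): `S` is nonempty, connected, and, `m` denoting the unique element of `S` with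
`S ⊆ I_m`, for all `i, j ∈ S` one has `i ∈ I_j` iff `j ∈ [i, m]`. -/
def Rooted (G : SimpleGraph V) (Iv : V → Set V) (S : Set V) : Prop :=
  S.Nonempty ∧ Conn G S ∧
    ∃ m ∈ S, S ⊆ Iv m ∧ ∀ i ∈ S, ∀ j ∈ S, (i ∈ Iv j ↔ j ∈ interval G i m)

/-- `S̄ := {v ∈ S : I_v ⊄ S}`. -/
def bar (Iv : V → Set V) (S : Set V) : Set V := {v ∈ S | ¬ Iv v ⊆ S}

/-- `S` is weakly rooted: `S` is nonempty, connected, and either `S̄ = ∅` or `S̄` is a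
(nonempty) connected rooted set. -/
def WeaklyRooted (G : SimpleGraph V) (Iv : V → Set V) (S : Set V) : Prop :=
  S.Nonempty ∧ Conn G S ∧ (bar Iv S = ∅ ∨ Rooted G Iv (bar Iv S))

/-- Two (nonempty connected) subsets `I`, `J` are compatible if `I ⊆ J`, or `J ⊆ I`, or
they are disjoint and no edge of `G` joins a vertex of `I` to a vertex of `J`. -/
def Compatible (G : SimpleGraph V) (I J : Set V) : Prop :=
  I ⊆ J ∨ J ⊆ I ∨ (I ∩ J = ∅ ∧ ∀ a ∈ I, ∀ b ∈ J, ¬ G.Adj a b)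

end Paper
section Helpers
open SimpleGraph Paper
variable {V : Type*} {G : SimpleGraph V}

lemma walk_of_induce {S : Set V} :
    ∀ {a b : S} (_ : (G.induce S).Walk a b),
      ∃ q : G.Walk a.1 b.1, ∀ v ∈ q.support, v ∈ S := by
  intro a b p
  induction p with
  | nil => exact ⟨Walk.nil, by simp [a.2]⟩
  | cons h _ ih =>
    obtain ⟨q, hq⟩ := ih
    refine ⟨Walk.cons h q, ?_⟩
    intro v hv
    replace hv := List.mem_cons.mp hv
    rcases hv with rfl | h2
    · exact Subtype.coe_prop _
    · exact hq v h2

lemma reach_induce {S : Set V} :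
    ∀ {x y : V} (p : G.Walk x y), (∀ v ∈ p.support, v ∈ S) →
    ∀ (hx : x ∈ S) (hy : y ∈ S), (G.induce S).Reachable ⟨x, hx⟩ ⟨y, hy⟩ := by
  intro x y p
  induction p with
  | nil => intro _ hx hy; exact Reachable.refl _
  | @cons x z y h q ih =>
    intro hsup hx hy
    have hz : z ∈ S := hsup z (by rw [Walk.support_cons]; exact List.mem_cons_of_mem _ q.start_mem_support)
    have hadj : (G.induce S).Adj ⟨x, hx⟩ ⟨z, hz⟩ := h
    exact hadj.reachable.trans (ih (fun v hv => hsup v (by rw [Walk.support_cons]; exact List.mem_cons_of_mem _ hv)) hz hy)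

lemma conn_iff_walks {S : Set V} :
    Conn G S ↔ ∀ x ∈ S, ∀ y ∈ S, ∃ p : G.Walk x y, ∀ v ∈ p.support, v ∈ S := by
  constructor
  · intro h x hx y hy
    obtain ⟨p⟩ := h ⟨x, hx⟩ ⟨y, hy⟩
    exact walk_of_induce p
  · intro h a b
    obtain ⟨p, hp⟩ := h a a.2 b b.2
    have := reach_induce p hp a.2 b.2
    obtain ⟨a, ha⟩ := a; obtain ⟨b, hb⟩ := b
    exact this

lemma conn_singleton (a : V) : Conn G {a} := by
  rw [conn_iff_walks]
  rintro x rfl y rfl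
  exact ⟨Walk.nil, by simp⟩

lemma conn_union {A B : Set V} (hA : Conn G A) (hB : Conn G B)
    (h : (A ∩ B).Nonempty) : Conn G (A ∪ B) := by
  rw [conn_iff_walks] at hA hB ⊢
  obtain ⟨c, hcA, hcB⟩ := h
  have key : ∀ x ∈ A ∪ B, ∃ p : G.Walk x c, ∀ v ∈ p.support, v ∈ A ∪ B := by
    rintro x (hx | hx)
    · obtain ⟨p, hp⟩ := hA x hx c hcA
      exact ⟨p, fun v hv => Or.inl (hp v hv)⟩
    · obtain ⟨p, hp⟩ := hB x hx c hcB
      exact ⟨p, fun v hv => Or.inr (hp v hv)⟩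
  intro x hx y hy
  obtain ⟨p, hp⟩ := key x hx
  obtain ⟨q, hq⟩ := key y hy
  refine ⟨p.append q.reverse, ?_⟩
  intro v hv
  rcases (Walk.mem_support_append_iff _ _).mp hv with h1 | h2
  · exact hp v h1
  · exact hq v (by rwa [Walk.support_reverse, List.mem_reverse] at h2)

lemma conn_insert {A : Set V} {a b : V} (hA : Conn G A) (ha : a ∈ A)
    (hab : G.Adj a b) : Conn G (insert b A) := by
  have : Conn G ({b, a} : Set V) := by
    rw [conn_iff_walks]
    have hw : ∃ p : G.Walk b a, ∀ v ∈ p.support, v ∈ ({b, a} : Set V) :=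
      ⟨Walk.cons hab.symm Walk.nil, by intro v hv; simpa using hv⟩
    rintro x (rfl | rfl) y (rfl | rfl)
    · exact ⟨Walk.nil, by simp⟩
    · exact hw
    · obtain ⟨p, hp⟩ := hw
      exact ⟨p.reverse, by intro v hv; rw [Walk.support_reverse, List.mem_reverse] at hv; exact hp v hv⟩
    · exact ⟨Walk.nil, by simp⟩
  have := conn_union this hA ⟨a, by simp, ha⟩
  have hset : ({b, a} : Set V) ∪ A = insert b A := by
    rw [Set.insert_union, Set.singleton_union, Set.insert_eq_self.mpr ha]
  rwa [hset] at this
end Helpers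

section Nested
open SimpleGraph Paper
variable {V : Type*} {G : SimpleGraph V} {𝓘 : Set (Set V)}

lemma nested_nonadj (hN : Nested G 𝓘) {I J : Set V} (hI : I ∈ 𝓘) (hJ : J ∈ 𝓘)
    (hd : I ∩ J = ∅) : ∀ a ∈ I, ∀ b ∈ J, ¬ G.Adj a b := by
  intro a haI b hbJ hadj
  have hIne : I.Nonempty := (hN.1 I hI).1
  have hne : I ≠ J := by
    rintro rfl
    exact absurd hd (by simpa [Set.inter_self] using hIne.ne_empty)
  have hpair : ({I, J} : Set (Set V)).Pairwise fun A B => A ∩ B = ∅ := by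
    intro A hA B hB hAB
    simp only [Set.mem_insert_iff, Set.mem_singleton_iff] at hA hB
    rcases hA with rfl | rfl <;> rcases hB with rfl | rfl
    · exact absurd rfl hAB
    · exact hd
    · rw [Set.inter_comm]; exact hd
    · exact absurd rfl hAB
  have hsub : ({I, J} : Set (Set V)) ⊆ 𝓘 := by
    rintro K (rfl | hK) <;> simp_all
  have hcomp := (hN.2.2 {I, J} hsub hpair I).mpr (by simp)
  rw [Set.sUnion_pair] at hcomp
  have hconn : Conn G (I ∪ J) := by
    have h1 : Conn G (insert b I) := conn_insert (hN.1 I hI).2 haI hadj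
    have h2 := conn_union h1 (hN.1 J hJ).2 ⟨b, Set.mem_insert _ _, hbJ⟩
    have : insert b I ∪ J = I ∪ J := by
      rw [Set.insert_union, Set.insert_eq_self.mpr (Set.mem_union_right I hbJ)]
    rwa [this] at h2
  have := hcomp.2.2.2 (I ∪ J) Set.subset_union_left (subset_refl _) hconn
  have hbI : b ∈ I := this ▸ (Set.mem_union_right I hbJ)
  have : b ∈ I ∩ J := ⟨hbI, hbJ⟩
  simp [hd] at this

lemma subset_of_mem_sUnion {𝓙 : Set (Set V)}
    (hadj : ∀ K ∈ 𝓙, ∀ K' ∈ 𝓙, K ≠ K' → ∀ a ∈ K, ∀ b ∈ K', ¬ G.Adj a b)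
    {S : Set V} {x : V} (hS : Conn G S) (hSsub : S ⊆ ⋃₀ 𝓙) (hx : x ∈ S)
    {K : Set V} (hK : K ∈ 𝓙) (hxK : x ∈ K) : S ⊆ K := by
  have aux : ∀ {u w : V} (p : G.Walk u w), (∀ v ∈ p.support, v ∈ ⋃₀ 𝓙) →
      u ∈ K → w ∈ K := by
    intro u w p
    induction p with
    | nil => intro _ h; exact h
    | @cons u z w h q ih =>
      intro hsup huK
      have hz : z ∈ ⋃₀ 𝓙 := hsup z (by rw [Walk.support_cons]; exact List.mem_cons_of_mem _ q.start_mem_support)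
      obtain ⟨K', hK', hzK'⟩ := hz
      have hzK : z ∈ K := by
        by_contra hzn
        exact hadj K hK K' hK' (fun he => hzn (he ▸ hzK')) u huK z hzK' h
      exact ih (fun v hv => hsup v (by rw [Walk.support_cons]; exact List.mem_cons_of_mem _ hv)) hzK
  intro y hy
  obtain ⟨p, hp⟩ := (conn_iff_walks.mp hS) x hx y hy
  exact aux p (fun v hv => hSsub (hp v hv)) hxK

lemma isCompOf_iff_nice {𝓙 : Set (Set V)}
    (hne : ∀ K ∈ 𝓙, K.Nonempty ∧ Conn G K)
    (hpd : 𝓙.Pairwise fun A B => A ∩ B = ∅)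
    (hadj : ∀ K ∈ 𝓙, ∀ K' ∈ 𝓙, K ≠ K' → ∀ a ∈ K, ∀ b ∈ K', ¬ G.Adj a b) :
    ∀ C : Set V, IsCompOf G C (⋃₀ 𝓙) ↔ C ∈ 𝓙 := by
  intro C
  constructor
  · rintro ⟨hCne, hCsub, hCconn, hCmax⟩
    obtain ⟨x, hx⟩ := hCne
    obtain ⟨K, hK, hxK⟩ := hCsub hx
    have hCK : C ⊆ K := subset_of_mem_sUnion hadj hCconn hCsub hx hK hxK
    have : K = C := hCmax K hCK (fun v hv => ⟨K, hK, hv⟩) (hne K hK).2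
    exact this ▸ hK
  · intro hC
    refine ⟨(hne C hC).1, fun v hv => ⟨C, hC, hv⟩, (hne C hC).2, ?_⟩
    intro D hCD hDsub hDconn
    obtain ⟨x, hx⟩ := (hne C hC).1
    have hDC : D ⊆ C := subset_of_mem_sUnion hadj hDconn hDsub (hCD hx) hC hx
    exact le_antisymm hDC hCD
end Nested

section Main
open SimpleGraph Paper
variable {V : Type*} [Fintype V] {G : SimpleGraph V} {𝓘 : Set (Set V)} {Iv : V → Set V}

lemma exists_root_aux (hN : Nested G 𝓘) (hIv : IsLeastContaining 𝓘 Iv) :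
    ∀ n : ℕ, ∀ J ∈ 𝓘, J.ncard ≤ n → ∀ S : Set V, S.Nonempty → Conn G S → S ⊆ J →
      ∃ m ∈ S, S ⊆ Iv m := by
  intro n
  induction n with
  | zero =>
    intro J _ hcard S hSne _ hSJ
    have : J = ∅ := (Set.ncard_eq_zero J.toFinite).mp (Nat.le_zero.mp hcard)
    obtain ⟨s, hs⟩ := hSne
    exact absurd (this ▸ hSJ hs) (Set.notMem_empty s)
  | succ n ih =>
    intro J hJ hcard S hSne hSconn hSJ
    by_cases hc : ∃ m ∈ S, S ⊆ Iv m
    · exact hc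
    push_neg at hc
    -- every m ∈ S has Iv m a proper subset of J
    have hproper : ∀ m ∈ S, Iv m ⊆ J ∧ Iv m ≠ J := by
      intro m hm
      have h1 : Iv m ⊆ J := (hIv m).2.2 J hJ (hSJ hm)
      refine ⟨h1, fun he => hc m hm (he ▸ hSJ)⟩
    -- choose maximal proper members
    have hKex : ∀ m, m ∈ S → ∃ K, (K ∈ 𝓘 ∧ m ∈ K ∧ K ⊆ J ∧ K ≠ J) ∧
        ∀ K', (K' ∈ 𝓘 ∧ m ∈ K' ∧ K' ⊆ J ∧ K' ≠ J) → K ⊆ K' → K = K' := by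
      intro m hm
      have hFne : ({K | K ∈ 𝓘 ∧ m ∈ K ∧ K ⊆ J ∧ K ≠ J} : Set (Set V)).Nonempty :=
        ⟨Iv m, (hIv m).1, (hIv m).2.1, (hproper m hm).1, (hproper m hm).2⟩
      obtain ⟨K, hKmem, hKmax⟩ :=
        Set.Finite.exists_maximalFor id _ (Set.toFinite _) hFne
      exact ⟨K, hKmem, fun K' h1 h2 => le_antisymm h2 (hKmax h1 h2)⟩
    choose! K hK1 hK2 using hKex
    -- pairwise disjointness of the K m
    have hdisj : ∀ m ∈ S, ∀ m' ∈ S, K m ≠ K m' → K m ∩ K m' = ∅ := by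
      intro m hm m' hm' hne
      rcases hN.2.1 (K m) (hK1 m hm).1 (K m') (hK1 m' hm').1 with h | h | h
      · exact absurd (hK2 m hm (K m') ⟨(hK1 m' hm').1, h (hK1 m hm).2.1,
          (hK1 m' hm').2.2⟩ h) hne
      · exact absurd (hK2 m' hm' (K m) ⟨(hK1 m hm).1, h (hK1 m' hm').2.1,
          (hK1 m hm).2.2⟩ h).symm hne
      · exact h
    -- S sits inside a single K m
    obtain ⟨s₀, hs₀⟩ := hSne
    have hSsub : S ⊆ ⋃₀ (K '' S) := fun v hv => ⟨K v, ⟨v, hv, rfl⟩, (hK1 v hv).2.1⟩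
    have hadj : ∀ A ∈ K '' S, ∀ B ∈ K '' S, A ≠ B → ∀ a ∈ A, ∀ b ∈ B, ¬ G.Adj a b := by
      rintro A ⟨m, hm, rfl⟩ B ⟨m', hm', rfl⟩ hne
      exact nested_nonadj hN (hK1 m hm).1 (hK1 m' hm').1 (hdisj m hm m' hm' hne)
    have hSK : S ⊆ K s₀ :=
      subset_of_mem_sUnion hadj hSconn hSsub hs₀ ⟨s₀, hs₀, rfl⟩ (hK1 s₀ hs₀).2.1
    have hlt : (K s₀).ncard < J.ncard :=
      Set.ncard_lt_ncard (HasSubset.Subset.ssubset_of_ne (hK1 s₀ hs₀).2.2.1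
        (hK1 s₀ hs₀).2.2.2) J.toFinite
    exact ih (K s₀) (hK1 s₀ hs₀).1 (by omega) S ⟨s₀, hs₀⟩ hSconn hSK

lemma exists_root (hN : Nested G 𝓘) (hU : ⋃₀ 𝓘 = Set.univ)
    (hIv : IsLeastContaining 𝓘 Iv) {S : Set V} (hSne : S.Nonempty)
    (hSconn : Conn G S) : ∃ m ∈ S, S ⊆ Iv m := by
  have hMex : ∀ v : V, ∃ M, (M ∈ 𝓘 ∧ v ∈ M) ∧ ∀ K ∈ 𝓘, M ⊆ K → M = K := by
    intro v
    have hv : v ∈ ⋃₀ 𝓘 := hU ▸ Set.mem_univ v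
    obtain ⟨I, hI, hvI⟩ := hv
    obtain ⟨M, hMmem, hMmax⟩ := Set.Finite.exists_maximalFor id
      ({K | K ∈ 𝓘 ∧ v ∈ K}) (Set.toFinite _) ⟨I, hI, hvI⟩
    exact ⟨M, hMmem, fun K hK hMK => le_antisymm hMK (hMmax ⟨hK, hMK hMmem.2⟩ hMK)⟩
  choose M hM1 hM2 using hMex
  have hdisj : ∀ v w : V, M v ≠ M w → M v ∩ M w = ∅ := by
    intro v w hne
    rcases hN.2.1 (M v) (hM1 v).1 (M w) (hM1 w).1 with h | h | h
    · exact absurd (hM2 v (M w) (hM1 w).1 h) hne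
    · exact absurd (hM2 w (M v) (hM1 v).1 h).symm hne
    · exact h
  obtain ⟨s₀, hs₀⟩ := hSne
  have hSsub : S ⊆ ⋃₀ (Set.range M) := fun v _ => ⟨M v, ⟨v, rfl⟩, (hM1 v).2⟩
  have hadj : ∀ A ∈ Set.range M, ∀ B ∈ Set.range M, A ≠ B →
      ∀ a ∈ A, ∀ b ∈ B, ¬ G.Adj a b := by
    rintro A ⟨v, rfl⟩ B ⟨w, rfl⟩ hne
    exact nested_nonadj hN (hM1 v).1 (hM1 w).1 (hdisj v w hne)
  have hSM : S ⊆ M s₀ :=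
    subset_of_mem_sUnion hadj hSconn hSsub hs₀ ⟨s₀, rfl⟩ (hM1 s₀).2
  exact exists_root_aux hN hIv (M s₀).ncard (M s₀) (hM1 s₀).1 le_rfl S ⟨s₀, hs₀⟩ hSconn hSM
end Main

section Uniq
open SimpleGraph Paper
variable {V : Type*} [Fintype V] {G : SimpleGraph V} {𝓘 : Set (Set V)} {Iv : V → Set V}

lemma root_unique (hM : MaxNested G 𝓘) (hIv : IsLeastContaining 𝓘 Iv)
    {m m' : V} (hne : m ≠ m') (heq : Iv m = Iv m') : False := by
  obtain ⟨hN, hU, hmax⟩ := hM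
  set J := Iv m with hJ
  have hJmem : J ∈ 𝓘 := (hIv m).1
  have hmJ : m ∈ J := (hIv m).2.1
  have hm'J : m' ∈ J := heq ▸ (hIv m').2.1
  have hmJ' : m ∈ J \ {m'} := ⟨hmJ, by simpa using hne⟩
  -- maximal connected subset of J \ {m'} containing m
  have hFne : ({D | D ⊆ J \ {m'} ∧ m ∈ D ∧ Conn G D} : Set (Set V)).Nonempty :=
    ⟨{m}, by simpa using hmJ', rfl, conn_singleton m⟩
  obtain ⟨J', hJ'mem, hJ'max⟩ :=
    Set.Finite.exists_maximalFor id _ (Set.toFinite _) hFne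
  obtain ⟨hJ'sub, hmJ'', hJ'conn⟩ := hJ'mem
  have hJ'max' : ∀ D, D ⊆ J \ {m'} → m ∈ D → Conn G D → J' ⊆ D → J' = D :=
    fun D h1 h2 h3 h4 => le_antisymm h4 (hJ'max ⟨h1, h2, h3⟩ h4)
  have hJ'ne : J'.Nonempty := ⟨m, hmJ''⟩
  -- absorption properties
  have absorb : ∀ D, D ⊆ J \ {m'} → Conn G D → (D ∩ J').Nonempty → D ⊆ J' := by
    intro D h1 h2 h3
    have hu : Conn G (D ∪ J') := conn_union h2 hJ'conn h3
    have := hJ'max' (D ∪ J') (Set.union_subset h1 hJ'sub)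
      (Set.mem_union_right D hmJ'') hu Set.subset_union_right
    exact fun v hv => this ▸ Set.mem_union_left J' hv
  have adj_absorb : ∀ a ∈ J \ {m'}, ∀ b ∈ J', G.Adj a b → a ∈ J' := by
    intro a ha b hb hab
    have hi : Conn G (insert a J') := conn_insert hJ'conn hb hab.symm
    have := hJ'max' (insert a J') (Set.insert_subset ha hJ'sub)
      (Set.mem_insert_of_mem a hmJ'') hi (Set.subset_insert a J')
    exact this ▸ Set.mem_insert a J'
  -- J' is not a member of 𝓘
  have hJ'notin : J' ∉ 𝓘 := by
    intro hmem
    have : J ⊆ J' := (hIv m).2.2 J' hmem hmJ''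
    exact (hJ'sub (this hm'J)).2 rfl
  -- key trichotomy for members of 𝓘 against J'
  have key : ∀ I ∈ 𝓘, J' ⊆ I ∨ I ⊆ J' ∨ I ∩ J' = ∅ := by
    intro I hI
    rcases hN.2.1 I hI J hJmem with h | h | h
    · -- I ⊆ J
      by_cases hm'I : m' ∈ I
      · have : J ⊆ I := heq ▸ (hIv m').2.2 I hI hm'I
        have hIJ : I = J := le_antisymm h this
        exact Or.inl (by rw [hIJ]; exact hJ'sub.trans Set.diff_subset)
      · have hIsub : I ⊆ J \ {m'} := fun v hv => ⟨h hv, by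
          simp only [Set.mem_singleton_iff]; rintro rfl; exact hm'I hv⟩
        by_cases hint : (I ∩ J').Nonempty
        · exact Or.inr (Or.inl (absorb I hIsub (hN.1 I hI).2 hint))
        · exact Or.inr (Or.inr (Set.not_nonempty_iff_eq_empty.mp hint))
    · exact Or.inl (h.trans' (hJ'sub.trans Set.diff_subset))
    · exact Or.inr (Or.inr (by
        have : I ∩ J' ⊆ I ∩ J := Set.inter_subset_inter_right I (hJ'sub.trans Set.diff_subset)
        exact Set.subset_empty_iff.mp (h ▸ this)))
  -- no edges between J' and disjoint members of 𝓘
  have keyadj : ∀ I ∈ 𝓘, I ∩ J' = ∅ → ∀ a ∈ I, ∀ b ∈ J', ¬ G.Adj a b := by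
    intro I hI hd a ha b hb hab
    rcases hN.2.1 I hI J hJmem with h | h | h
    · by_cases hm'I : m' ∈ I
      · have : J ⊆ I := heq ▸ (hIv m').2.2 I hI hm'I
        have : m ∈ I ∩ J' := ⟨this hmJ, hmJ''⟩
        simp [hd] at this
      · have hIsub : I ⊆ J \ {m'} := fun v hv => ⟨h hv, by
          simp only [Set.mem_singleton_iff]; rintro rfl; exact hm'I hv⟩
        have : a ∈ J' := adj_absorb a (hIsub ha) b hb hab
        have : a ∈ I ∩ J' := ⟨ha, this⟩
        simp [hd] at this
    · have : m ∈ I ∩ J' := ⟨h (hJ'sub.trans Set.diff_subset hmJ''), hmJ''⟩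
      simp [hd] at this
    · exact nested_nonadj hN hI hJmem h a ha b (hJ'sub.trans Set.diff_subset hb) hab
  -- the enlarged family is nested
  have hNested : Nested G (insert J' 𝓘) := by
    refine ⟨?_, ?_, ?_⟩
    · rintro T (rfl | hT)
      · exact ⟨hJ'ne, hJ'conn⟩
      · exact hN.1 T hT
    · rintro A (rfl | hA) B (rfl | hB)
      · exact Or.inl (subset_refl _)
      · rcases key B hB with h | h | h
        · exact Or.inl h
        · exact Or.inr (Or.inl h)
        · exact Or.inr (Or.inr (by rw [Set.inter_comm]; exact h))
      · rcases key A hA with h | h | h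
        · exact Or.inr (Or.inl h)
        · exact Or.inl h
        · exact Or.inr (Or.inr h)
      · exact hN.2.1 A hA B hB
    · intro 𝓙 h𝓙 hpd C
      refine isCompOf_iff_nice ?_ hpd ?_ C
      · intro T hT
        rcases h𝓙 hT with rfl | hT'
        · exact ⟨hJ'ne, hJ'conn⟩
        · exact hN.1 T hT'
      · intro A hA B hB hAB a ha b hb hab
        have hd : A ∩ B = ∅ := hpd hA hB hAB
        rcases h𝓙 hA with rfl | hA' <;> rcases h𝓙 hB with rfl | hB'
        · exact hAB rfl
        · exact keyadj B hB' (by rw [Set.inter_comm]; exact hd) b hb a ha hab.symm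
        · exact keyadj A hA' hd a ha b hb hab
        · exact nested_nonadj hN hA' hB' hd a ha b hb hab
  have := hmax (insert J' 𝓘) hNested (Set.subset_insert J' 𝓘)
  exact hJ'notin (this ▸ Set.mem_insert J' 𝓘)
end Uniq

/-- Let `𝓘` be a maximal nested collection on the vertex set `V` of a finite tree. Then
every nonempty connected subset `S ⊆ V` contains a unique vertex `m` with `S ⊆ I_m`;
equivalently, `S` has a unique maximum with respect to the order `v ≤ w ↔ v ∈ I_w`. -/
theorem statement_9 {V : Type*} [Fintype V] (G : SimpleGraph V) (hG : G.IsTree)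
    (𝓘 : Set (Set V)) (h𝓘 : Paper.MaxNested G 𝓘)
    (Iv : V → Set V) (hIv : Paper.IsLeastContaining 𝓘 Iv) :
    ∀ S : Set V, S.Nonempty → Paper.Conn G S → ∃! m : V, m ∈ S ∧ S ⊆ Iv m := by
  intro S hSne hSconn
  obtain ⟨m, hmS, hmIv⟩ := exists_root h𝓘.1 h𝓘.2.1 hIv hSne hSconn
  refine ⟨m, ⟨hmS, hmIv⟩, ?_⟩
  rintro y ⟨hyS, hyIv⟩
  by_contra hne
  have h1 : Iv y ⊆ Iv m := (hIv y).2.2 (Iv m) (hIv m).1 (hmIv hyS)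
  have h2 : Iv m ⊆ Iv y := (hIv m).2.2 (Iv y) (hIv y).1 (hyIv hmS)
  exact root_unique h𝓘 hIv hne (le_antisymm (α := Set V) h1 h2)
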